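/- Let C be a real m × n matrix and d ∈ ℝ^m. If the polyhedron Poly(C, d) = { x ∈ ℝⁿ : C x ≤ d } is nonempty and unbounded, then there exists a nonzero vector v ∈ ℝⁿ with C v ≤ 0; moreover, for any such v, every x ∈ Poly(C, d) and every α ≥ 0 satisfy x + α v ∈ Poly(C, d). -/

import Mathlib

open Matrix

/-- Recession direction of an unbounded polyhedron: if `Poly(C, d)` is nonempty and
unbounded, there is a nonzero `v` with `C v ≤ 0`; moreover for any such `v`, every
`x ∈ Poly(C, d)` and every `α ≥ 0` satisfy `x + α v ∈ Poly(C, d)`. -/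
theorem unbounded_polyhedron_recession_direction
    (n m : ℕ) (C : Matrix (Fin m) (Fin n) ℝ) (d : Fin m → ℝ)
    (hne : ({x : Fin n → ℝ | C.mulVec x ≤ d}).Nonempty)
    (hub : ¬ Bornology.IsBounded {x : Fin n → ℝ | C.mulVec x ≤ d}) :
    (∃ v : Fin n → ℝ, v ≠ 0 ∧ C.mulVec v ≤ 0) ∧
    (∀ v : Fin n → ℝ, C.mulVec v ≤ 0 →
      ∀ x ∈ {x : Fin n → ℝ | C.mulVec x ≤ d}, ∀ α : ℝ, 0 ≤ α →
        x + α • v ∈ {x : Fin n → ℝ | C.mulVec x ≤ d}) := by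
  constructor
  · -- existence of recession direction
    -- get a sequence with norms going to infinity
    have hseq : ∀ k : ℕ, ∃ x : Fin n → ℝ, C.mulVec x ≤ d ∧ (k : ℝ) < ‖x‖ := by
      intro k
      by_contra h
      push_neg at h
      exact hub (Metric.isBounded_iff_subset_closedBall 0 |>.2 ⟨k, fun x hx => by
        simpa [Metric.mem_closedBall, dist_eq_norm] using (h x hx)⟩)
    choose x hx hxn using hseq
    have hnorm : Filter.Tendsto (fun k => ‖x k‖) Filter.atTop Filter.atTop :=
      Filter.tendsto_atTop_mono (fun k => (hxn k).le)
        (tendsto_natCast_atTop_atTop)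
    have hpos : ∀ k, 0 < ‖x k‖ := fun k => lt_of_le_of_lt (Nat.cast_nonneg k) (hxn k)
    set u : ℕ → (Fin n → ℝ) := fun k => (‖x k‖)⁻¹ • x k with hu
    have humem : ∀ k, u k ∈ Metric.sphere (0 : Fin n → ℝ) 1 := by
      intro k
      simp [hu, norm_smul, abs_of_pos (inv_pos.2 (hpos k)),
        inv_mul_cancel₀ (hpos k).ne']
    obtain ⟨v, hvmem, φ, hφ, hconv⟩ :=
      (isCompact_sphere (0 : Fin n → ℝ) 1).tendsto_subseq humem
    refine ⟨v, ?_, ?_⟩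
    · intro hv0
      rw [hv0] at hvmem
      simp at hvmem
    · -- C v ≤ 0
      have hcont : Continuous (fun y : Fin n → ℝ => C.mulVec y) := by
        have := LinearMap.continuous_of_finiteDimensional (Matrix.mulVecLin C)
        exact this
      have hCv : Filter.Tendsto (fun j => C.mulVec (u (φ j))) Filter.atTop
          (nhds (C.mulVec v)) := (hcont.tendsto v).comp hconv
      intro i
      have hcomp : Filter.Tendsto (fun j => C.mulVec (u (φ j)) i) Filter.atTop
          (nhds (C.mulVec v i)) := by
        have := tendsto_pi_nhds.1 hCv i
        exact this
      have hbound : ∀ j, C.mulVec (u (φ j)) i ≤ (‖x (φ j)‖)⁻¹ * d i := by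
        intro j
        have : C.mulVec (u (φ j)) i = (‖x (φ j)‖)⁻¹ * C.mulVec (x (φ j)) i := by
          simp [hu, Matrix.mulVec_smul]
        rw [this]
        exact mul_le_mul_of_nonneg_left (hx (φ j) i) (inv_nonneg.2 (hpos (φ j)).le)
      have hzero : Filter.Tendsto (fun j => (‖x (φ j)‖)⁻¹ * d i) Filter.atTop
          (nhds 0) := by
        have h1 : Filter.Tendsto (fun j => (‖x (φ j)‖)⁻¹) Filter.atTop (nhds 0) :=
          (hnorm.comp hφ.tendsto_atTop).inv_tendsto_atTop
        simpa using h1.mul_const (d i)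
      have := le_of_tendsto_of_tendsto' hcomp hzero hbound
      simpa using this
  · intro v hv x hx α hα i
    have : C.mulVec (x + α • v) i = C.mulVec x i + α * C.mulVec v i := by
      simp [Matrix.mulVec_add, Matrix.mulVec_smul]
    rw [this]
    have h1 : α * C.mulVec v i ≤ 0 := mul_nonpos_of_nonneg_of_nonpos hα (hv i)
    have h2 := hx i
    linarith
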